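/- An allocation M is the outcome of every balanced policy if and only if, for every agent a_j, M allocates to a_j exactly her k most preferred items in I (so in particular the agents' top-k sets are pairwise disjoint and cover I). -/

import Mathlib

open Finset
open scoped Classical

/-- The most preferred item of a nonempty finset w.r.t. a linear order
(greater means more preferred). -/
noncomputable def favorite {ι : Type} (L : LinearOrder ι) (S : Finset ι) (h : S.Nonempty) : ι :=
  @Finset.max' ι L S h

/-- Sequential allocation: process the turns in order; at each turn the agent whose
turn it is picks her most preferred item among the items not yet allocated.
Returns the list of (agent, item) picks, in order. -/
noncomputable def seqAlloc {n : ℕ} {ι : Type} [DecidableEq ι]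
    (P : Fin n → LinearOrder ι) : List (Fin n) → Finset ι → List (Fin n × ι)
  | [], _ => []
  | a :: rest, S =>
    if h : S.Nonempty then
      (a, favorite (P a) S h) :: seqAlloc P rest (S.erase (favorite (P a) S h))
    else []

/-- `M` is the outcome of the policy `π`: every item is picked by the agent that
`M` assigns it to. -/
def IsOutcome {n : ℕ} {ι : Type} [Fintype ι] [DecidableEq ι]
    (P : Fin n → LinearOrder ι) (π : List (Fin n)) (M : ι → Fin n) : Prop :=
  ∀ o : ι, (M o, o) ∈ seqAlloc P π Finset.univ

/-- The set of items that agent `a` picks under the policy `π`. -/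
noncomputable def receives {n : ℕ} {ι : Type} [Fintype ι] [DecidableEq ι]
    (P : Fin n → LinearOrder ι) (π : List (Fin n)) (a : Fin n) : Finset ι :=
  Finset.univ.filter (fun o => (a, o) ∈ seqAlloc P π Finset.univ)

/-- An allocation `M` is Pareto optimal if there is no bijection `f` of the items such
that every agent weakly prefers `f o` to `o` for each item `o` she gets, with at least
one strict preference. -/
def ParetoOptimal {n : ℕ} {ι : Type} (P : Fin n → LinearOrder ι) (M : ι → Fin n) : Prop :=
  ¬ ∃ f : ι ≃ ι, (∀ o : ι, (P (M o)).le o (f o)) ∧ (∃ o : ι, (P (M o)).lt o (f o))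

/-- A policy is balanced if every agent has exactly `k` turns. -/
def BalancedPolicy {n : ℕ} (k : ℕ) (π : List (Fin n)) : Prop :=
  ∀ a : Fin n, π.count a = k

/-- An allocation is balanced if every agent receives exactly `k` items. -/
def BalancedAlloc {n : ℕ} {ι : Type} [Fintype ι] (k : ℕ) (M : ι → Fin n) : Prop :=
  ∀ a : Fin n, (Finset.univ.filter (fun o => M o = a)).card = k

/-- A policy is recursively balanced if it splits into `k` consecutive rounds of `n`
turns each, every agent having exactly one turn in each round. -/
def RecBalanced (n k : ℕ) (π : List (Fin n)) : Prop :=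
  ∃ rounds : List (List (Fin n)), rounds.length = k ∧
    (∀ r ∈ rounds, r.length = n ∧ ∀ a : Fin n, r.count a = 1) ∧
    π = rounds.flatten

/-- A strict alternation policy: every one of the `k` rounds uses the same order `σ`
over the agents. -/
def StrictAlt (n k : ℕ) (π : List (Fin n)) : Prop :=
  ∃ σ : List (Fin n), σ.length = n ∧ (∀ a : Fin n, σ.count a = 1) ∧
    π = (List.replicate k σ).flatten

/-- A balanced alternation policy: odd-numbered rounds use the order `σ` over the agents
and even-numbered rounds use its reverse. -/
def BalAlt (n k : ℕ) (π : List (Fin n)) : Prop :=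
  ∃ σ : List (Fin n), σ.length = n ∧ (∀ a : Fin n, σ.count a = 1) ∧
    π = ((List.range k).map (fun r => if r % 2 = 0 then σ else σ.reverse)).flatten

/-- `p j i` (for `1 ≤ i ≤ k`) is the item ranked `i`-th by agent `j` among the items `M`
allocates to `j`: it is allocated to `j`, and exactly `i - 1` of the items allocated
to `j` are strictly preferred to it by agent `j`. -/
def IsRankingOf {n : ℕ} {ι : Type} [Fintype ι] (P : Fin n → LinearOrder ι) (k : ℕ)
    (M : ι → Fin n) (p : Fin n → ℕ → ι) : Prop :=
  ∀ (j : Fin n) (i : ℕ), 1 ≤ i → i ≤ k →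
    M (p j i) = j ∧
    (Finset.univ.filter (fun o => M o = j ∧ (P j).lt (p j i) o)).card = i - 1

/-- Condition 3: for all `1 ≤ t < s ≤ k` and all agents `j, j'`, agent `j` strictly
prefers `p j t` to `p j' s`. -/
def Cond3 {n : ℕ} {ι : Type} (P : Fin n → LinearOrder ι) (k : ℕ) (p : Fin n → ℕ → ι) : Prop :=
  ∀ t s : ℕ, 1 ≤ t → t < s → s ≤ k → ∀ j j' : Fin n, (P j).lt (p j' s) (p j t)

/-- The edge relation of the directed graph `G_M`: for odd `i ≤ k` an edge `a → b`
whenever `b` strictly prefers `p a i` to `p b i`, and for even `i ≤ k` an edge `a → b`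
whenever `a` strictly prefers `p b i` to `p a i`. -/
def GM {n : ℕ} {ι : Type} (P : Fin n → LinearOrder ι) (k : ℕ) (p : Fin n → ℕ → ι)
    (a b : Fin n) : Prop :=
  (∃ i : ℕ, 1 ≤ i ∧ i ≤ k ∧ i % 2 = 1 ∧ (P b).lt (p b i) (p a i)) ∨
  (∃ i : ℕ, 1 ≤ i ∧ i ≤ k ∧ i % 2 = 0 ∧ (P a).lt (p a i) (p b i))

/-- The edge relation of the directed graph `H_M`: for each `i ≤ k` an edge `a → b`
whenever `b` strictly prefers `p a i` to `p b i`. -/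
def HM {n : ℕ} {ι : Type} (P : Fin n → LinearOrder ι) (k : ℕ) (p : Fin n → ℕ → ι)
    (a b : Fin n) : Prop :=
  ∃ i : ℕ, 1 ≤ i ∧ i ≤ k ∧ (P b).lt (p b i) (p a i)

/-- The `k` most preferred items of agent `j`: those items with fewer than `k` items
strictly preferred to them by `j`. -/
noncomputable def topItems {n : ℕ} {ι : Type} [Fintype ι] (P : Fin n → LinearOrder ι)
    (k : ℕ) (j : Fin n) : Finset ι :=
  Finset.univ.filter (fun o => (Finset.univ.filter (fun o' => (P j).lt o o')).card < k)

/-- The rank of item `o` in agent `j`'s preference (the most preferred item has rank 1). -/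
noncomputable def rankOf {n : ℕ} {ι : Type} [Fintype ι] (P : Fin n → LinearOrder ι)
    (j : Fin n) (o : ι) : ℕ :=
  (Finset.univ.filter (fun o' => (P j).lt o o')).card + 1
section AuxLemmas

variable {n : ℕ} {ι : Type} [DecidableEq ι]

lemma favorite_mem {ι : Type} (L : LinearOrder ι) (S : Finset ι) (h : S.Nonempty) :
    favorite L S h ∈ S := @Finset.max'_mem ι L S h

lemma favorite_le {ι : Type} (L : LinearOrder ι) (S : Finset ι) (h : S.Nonempty)
    {o : ι} (ho : o ∈ S) : L.le o (favorite L S h) := @Finset.le_max' ι L S o ho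

lemma aux_snd_mem (P : Fin n → LinearOrder ι) :
    ∀ (π : List (Fin n)) (S : Finset ι) (a : Fin n) (o : ι),
      (a, o) ∈ seqAlloc P π S → o ∈ S := by
  intro π
  induction π with
  | nil => intro S a o h; simp [seqAlloc] at h
  | cons b rest ih =>
    intro S a o h
    by_cases hS : S.Nonempty
    · rw [seqAlloc, dif_pos hS] at h
      rcases List.mem_cons.1 h with h | h
      · rw [Prod.mk.injEq] at h
        rw [h.2]
        exact favorite_mem _ _ _
      · exact Finset.mem_of_mem_erase (ih _ _ _ h)
    · rw [seqAlloc, dif_neg hS] at h; simp at h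

lemma aux_snd_inj (P : Fin n → LinearOrder ι) :
    ∀ (π : List (Fin n)) (S : Finset ι) (a b : Fin n) (o : ι),
      (a, o) ∈ seqAlloc P π S → (b, o) ∈ seqAlloc P π S → a = b := by
  intro π
  induction π with
  | nil => intro S a b o h; simp [seqAlloc] at h
  | cons c rest ih =>
    intro S a b o h1 h2
    by_cases hS : S.Nonempty
    · rw [seqAlloc, dif_pos hS] at h1 h2
      rcases List.mem_cons.1 h1 with h1 | h1 <;> rcases List.mem_cons.1 h2 with h2 | h2
      · rw [Prod.mk.injEq] at h1 h2; rw [h1.1, h2.1]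
      · rw [Prod.mk.injEq] at h1
        have := aux_snd_mem P _ _ _ _ h2
        rw [← h1.2] at this
        exact absurd rfl (Finset.ne_of_mem_erase this)
      · rw [Prod.mk.injEq] at h2
        have := aux_snd_mem P _ _ _ _ h1
        rw [← h2.2] at this
        exact absurd rfl (Finset.ne_of_mem_erase this)
      · exact ih _ _ _ _ h1 h2
    · rw [seqAlloc, dif_neg hS] at h1; simp at h1

lemma aux_covers (P : Fin n → LinearOrder ι) :
    ∀ (π : List (Fin n)) (S : Finset ι) (o : ι),
      o ∈ S → S.card ≤ π.length → ∃ a, (a, o) ∈ seqAlloc P π S := by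
  intro π
  induction π with
  | nil =>
    intro S o ho hl
    simp only [List.length_nil, Nat.le_zero, Finset.card_eq_zero] at hl
    subst hl
    simp at ho
  | cons b rest ih =>
    intro S o ho hl
    have hS : S.Nonempty := ⟨o, ho⟩
    rw [seqAlloc, dif_pos hS]
    by_cases heq : o = favorite (P b) S hS
    · exact ⟨b, by rw [heq]; exact List.mem_cons_self⟩
    · have ho' : o ∈ S.erase (favorite (P b) S hS) := Finset.mem_erase.2 ⟨heq, ho⟩
      have hm : favorite (P b) S hS ∈ S := favorite_mem _ _ _
      have hcard : (S.erase (favorite (P b) S hS)).card ≤ rest.length := by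
        rw [Finset.card_erase_of_mem hm]
        simp only [List.length_cons] at hl
        have := Finset.card_pos.2 hS
        omega
      obtain ⟨a, ha⟩ := ih _ _ ho' hcard
      exact ⟨a, List.mem_cons_of_mem _ ha⟩

lemma aux_length (k : ℕ) (π : List (Fin n)) (hπ : BalancedPolicy k π) :
    π.length = n * k := by
  have h1 : ∑ a ∈ π.toFinset, π.count a = π.length := List.sum_toFinset_count_eq_length π
  have h2 : ∑ a ∈ (Finset.univ : Finset (Fin n)), π.count a = π.length := by
    rw [← h1]
    exact (Finset.sum_subset (Finset.subset_univ _)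
      (fun x _ hx => List.count_eq_zero.2 (fun hmem => hx (List.mem_toFinset.2 hmem)))).symm
  rw [← h2, Finset.sum_congr rfl (fun a _ => hπ a), Finset.sum_const, Finset.card_univ,
    Fintype.card_fin, smul_eq_mul]

variable [Fintype ι]

lemma aux_topItems_upward (P : Fin n → LinearOrder ι) (k : ℕ) (j : Fin n) {o o' : ι}
    (ho : o ∈ topItems P k j) (h : (P j).le o o') : o' ∈ topItems P k j := by
  letI := P j
  rw [topItems, Finset.mem_filter] at ho ⊢
  refine ⟨Finset.mem_univ _, lt_of_le_of_lt ?_ ho.2⟩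
  apply Finset.card_le_card
  intro x hx
  simp only [Finset.mem_filter] at hx ⊢
  exact ⟨Finset.mem_univ _, lt_of_le_of_lt h hx.2⟩

lemma aux_card_topItems (P : Fin n → LinearOrder ι) (k : ℕ) (j : Fin n)
    (hk : k ≤ Fintype.card ι) : (topItems P k j).card = k := by
  letI := P j
  set N := Fintype.card ι with hN
  set f : ι → ℕ := fun o => (Finset.univ.filter (fun o' => (P j).lt o o')).card with hf
  have key : ∀ o o' : ι, (P j).lt o o' → f o' < f o := by
    intro o o' hlt
    apply Finset.card_lt_card
    rw [Finset.ssubset_iff_of_subset]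
    · exact ⟨o', Finset.mem_filter.2 ⟨Finset.mem_univ _, hlt⟩,
        by simp only [Finset.mem_filter]; exact fun h => absurd h.2 (lt_irrefl o')⟩
    · intro x hx
      simp only [Finset.mem_filter] at hx ⊢
      exact ⟨Finset.mem_univ _, lt_trans hlt hx.2⟩
  have hinj : Function.Injective f := by
    intro o o' h
    by_contra hne
    rcases lt_or_gt_of_ne hne with hlt | hlt
    · exact absurd h (by have := key o o' hlt; omega)
    · exact absurd h (by have := key o' o hlt; omega)
  have hltN : ∀ o : ι, f o < N := by
    intro o
    have hsub : Finset.univ.filter (fun o' => (P j).lt o o') ⊆ Finset.univ.erase o := by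
      intro x hx
      simp only [Finset.mem_filter] at hx
      exact Finset.mem_erase.2 ⟨(ne_of_lt hx.2).symm, Finset.mem_univ _⟩
    have h1 : f o ≤ (Finset.univ.erase o).card := Finset.card_le_card hsub
    have h2 : (Finset.univ.erase o).card = N - 1 := by
      rw [Finset.card_erase_of_mem (Finset.mem_univ _), Finset.card_univ]
    have h3 : 0 < N := Fintype.card_pos_iff.2 ⟨o⟩
    omega
  have himg : Finset.univ.image f = Finset.range N := by
    apply Finset.eq_of_subset_of_card_le
    · intro v hv
      simp only [Finset.mem_image] at hv
      obtain ⟨o, _, rfl⟩ := hv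
      exact Finset.mem_range.2 (hltN o)
    · rw [Finset.card_range, Finset.card_image_of_injective _ hinj, Finset.card_univ]
  have htop : topItems P k j = Finset.univ.filter (fun o => f o < k) := rfl
  rw [htop]
  have h1 : (Finset.univ.filter (fun o => f o < k)).card
      = ((Finset.univ.filter (fun o => f o < k)).image f).card :=
    (Finset.card_image_of_injective _ hinj).symm
  have h2 : (Finset.univ.filter (fun o => f o < k)).image f
      = (Finset.univ.image f).filter (fun v => v < k) := by
    ext v
    simp only [Finset.mem_image, Finset.mem_filter, Finset.mem_univ, true_and]
    constructor
    · rintro ⟨o, ho, rfl⟩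
      exact ⟨⟨o, rfl⟩, ho⟩
    · rintro ⟨⟨o, rfl⟩, hv⟩
      exact ⟨o, hv, rfl⟩
  have h3 : (Finset.range N).filter (fun v => v < k) = Finset.range k := by
    ext v
    simp only [Finset.mem_filter, Finset.mem_range]
    omega
  rw [h1, h2, himg, h3, Finset.card_range]

lemma aux_top_picks (P : Fin n → LinearOrder ι) (j : Fin n) :
    ∀ (c : ℕ) (τ : List (Fin n)) (S : Finset ι) (o : ι), o ∈ S →
      (S.filter (fun o' => (P j).lt o o')).card < c →
      (j, o) ∈ seqAlloc P (List.replicate c j ++ τ) S := by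
  letI := P j
  intro c
  induction c with
  | zero => intro τ S o _ h; omega
  | succ c ih =>
    intro τ S o ho hcard
    have hS : S.Nonempty := ⟨o, ho⟩
    have hrepl : List.replicate (c + 1) j ++ τ = j :: (List.replicate c j ++ τ) := by
      simp [List.replicate_succ]
    rw [hrepl, seqAlloc, dif_pos hS]
    set fav := favorite (P j) S hS with hfav
    by_cases heq : o = fav
    · rw [heq]; exact List.mem_cons_self
    · apply List.mem_cons_of_mem
      have hfS : fav ∈ S := favorite_mem _ _ _
      have holt : (P j).lt o fav :=
        lt_of_le_of_ne (favorite_le _ _ _ ho) heq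
      have hfmem : fav ∈ S.filter (fun o' => (P j).lt o o') :=
        Finset.mem_filter.2 ⟨hfS, holt⟩
      have ho' : o ∈ S.erase fav := Finset.mem_erase.2 ⟨heq, ho⟩
      apply ih
      · exact ho'
      · have : (S.erase fav).filter (fun o' => (P j).lt o o')
            = (S.filter (fun o' => (P j).lt o o')).erase fav := by
          ext x
          simp only [Finset.mem_filter, Finset.mem_erase]
          tauto
        rw [this, Finset.card_erase_of_mem hfmem]
        have := Finset.card_pos.2 ⟨fav, hfmem⟩
        omega

lemma aux_picks_top (P : Fin n → LinearOrder ι) (k : ℕ)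
    (hdisj : ∀ a b : Fin n, a ≠ b → Disjoint (topItems P k a) (topItems P k b)) :
    ∀ (π : List (Fin n)) (S : Finset ι),
      (∀ a, π.count a ≤ (S ∩ topItems P k a).card) →
      ∀ a o, (a, o) ∈ seqAlloc P π S → o ∈ topItems P k a := by
  intro π
  induction π with
  | nil => intro S _ a o h; simp [seqAlloc] at h
  | cons b rest ih =>
    intro S hcount a o hmem
    rw [seqAlloc] at hmem
    split at hmem
    case isFalse => simp at hmem
    case isTrue hS =>
    set fav := favorite (P b) S hS with hfav
    have hfavS : fav ∈ S := favorite_mem _ _ _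
    have hfavtop : fav ∈ topItems P k b := by
      have h1 : 1 ≤ (b :: rest).count b := by
        rw [List.count_cons_self]; omega
      have h2 := hcount b
      have hne : (S ∩ topItems P k b).Nonempty := Finset.card_pos.1 (by omega)
      obtain ⟨t, ht⟩ := hne
      rw [Finset.mem_inter] at ht
      exact aux_topItems_upward P k b ht.2 (favorite_le _ _ _ ht.1)
    rcases List.mem_cons.1 hmem with h | h
    · rw [Prod.mk.injEq] at h
      rw [h.1, h.2]
      exact hfavtop
    · apply ih (S.erase fav) _ a o h
      intro c
      by_cases hcb : c = b
      · subst hcb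
        have : (S.erase fav) ∩ topItems P k c = (S ∩ topItems P k c).erase fav := by
          ext x
          simp only [Finset.mem_inter, Finset.mem_erase]
          tauto
        rw [this, Finset.card_erase_of_mem (Finset.mem_inter.2 ⟨hfavS, hfavtop⟩)]
        have h2 := hcount c
        rw [List.count_cons_self] at h2
        omega
      · have hnotin : fav ∉ topItems P k c :=
          fun hx => (Finset.disjoint_left.1 (hdisj b c (Ne.symm hcb)) hfavtop) hx
        have : (S.erase fav) ∩ topItems P k c = S ∩ topItems P k c := by
          ext x
          simp only [Finset.mem_inter, Finset.mem_erase]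
          constructor
          · tauto
          · intro hx
            exact ⟨⟨fun he => hnotin (he ▸ hx.2), hx.1⟩, hx.2⟩
        rw [this]
        have h2 := hcount c
        rw [List.count_cons_of_ne (Ne.symm hcb)] at h2
        exact h2

lemma aux_count_flatMap (k : ℕ) (b : Fin n) :
    ∀ l : List (Fin n), (l.flatMap (fun a => List.replicate k a)).count b = k * l.count b := by
  intro l
  induction l with
  | nil => simp
  | cons a rest ih =>
    rw [List.flatMap_cons, List.count_append, ih]
    by_cases h : b = a
    · subst h
      simp [List.count_replicate, List.count_cons_self]
      ring
    · simp [List.count_replicate, List.count_cons_of_ne h, h, Ne.symm h]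

end AuxLemmas

/-- An allocation `M` is the outcome of every balanced policy if and only
if every agent receives exactly her `k` most preferred items. -/
theorem necessary_assignment_balanced
    {ι : Type} [Fintype ι] [DecidableEq ι] {n k : ℕ} (hn : 0 < n) (hk : 1 ≤ k)
    (hcard : Fintype.card ι = k * n)
    (P : Fin n → LinearOrder ι) (M : ι → Fin n) :
    (∀ π : List (Fin n), BalancedPolicy k π → IsOutcome P π M) ↔
      ∀ j : Fin n, (Finset.univ.filter (fun o => M o = j)) = topItems P k j := by
  have hkcard : k ≤ Fintype.card ι := by
    rw [hcard]
    calc k = k * 1 := (mul_one k).symm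
    _ ≤ k * n := Nat.mul_le_mul_left k hn
  constructor
  · intro H
    have hsub : ∀ j : Fin n, topItems P k j ⊆ Finset.univ.filter (fun o => M o = j) := by
      intro j o ho
      set τ := ((List.finRange n).filter (fun a => a != j)).flatMap
        (fun a => List.replicate k a) with hτ
      set π := List.replicate k j ++ τ with hπ
      have hbal : BalancedPolicy k π := by
        intro a
        rw [hπ, List.count_append, List.count_replicate, hτ, aux_count_flatMap]
        by_cases haj : a = j
        · subst haj
          have h0 : List.count a ((List.finRange n).filter (fun x => x != a)) = 0 := by
            rw [List.count_eq_zero]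
            intro hmem
            rw [List.mem_filter] at hmem
            simp at hmem
          simp [h0]
        · have h1 : List.count a ((List.finRange n).filter (fun x => x != j)) = 1 := by
            apply List.count_eq_one_of_mem ((List.nodup_finRange n).filter _)
            rw [List.mem_filter]
            exact ⟨List.mem_finRange a, by simpa using haj⟩
          simp [h1, haj]
          exact fun h => absurd h.symm haj
      have houtcome := H π hbal
      have hjo : (j, o) ∈ seqAlloc P π Finset.univ := by
        rw [hπ]
        apply aux_top_picks
        · exact Finset.mem_univ o
        · rw [topItems, Finset.mem_filter] at ho
          exact ho.2
      have hMo : M o = j := aux_snd_inj P π Finset.univ (M o) j o (houtcome o) hjo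
      exact Finset.mem_filter.2 ⟨Finset.mem_univ o, hMo⟩
    have hcardtop : ∀ j : Fin n, (topItems P k j).card = k :=
      fun j => aux_card_topItems P k j hkcard
    have hge : ∀ j : Fin n, k ≤ (Finset.univ.filter (fun o => M o = j)).card :=
      fun j => (hcardtop j) ▸ Finset.card_le_card (hsub j)
    have hsum : ∑ j : Fin n, (Finset.univ.filter (fun o => M o = j)).card = k * n := by
      rw [← hcard, ← Finset.card_univ]
      exact (Finset.card_eq_sum_card_fiberwise (fun x _ => Finset.mem_univ (M x))).symm
    have hconst : ∑ _j : Fin n, k = ∑ j : Fin n, (Finset.univ.filter (fun o => M o = j)).card := by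
      rw [hsum, Finset.sum_const, Finset.card_univ, Fintype.card_fin, smul_eq_mul, Nat.mul_comm]
    have heq' := (Finset.sum_eq_sum_iff_of_le (fun i _ => hge i)).1 hconst
    have heq : ∀ j : Fin n, (Finset.univ.filter (fun o => M o = j)).card = k :=
      fun j => (heq' j (Finset.mem_univ j)).symm
    intro j
    exact (Finset.eq_of_subset_of_card_le (hsub j) (by rw [heq j, hcardtop j])).symm
  · intro H π hbal o
    have hdisj : ∀ a b : Fin n, a ≠ b → Disjoint (topItems P k a) (topItems P k b) := by
      intro a b hab
      rw [Finset.disjoint_left]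
      intro x hxa hxb
      rw [← H a, Finset.mem_filter] at hxa
      rw [← H b, Finset.mem_filter] at hxb
      exact hab (hxa.2 ▸ hxb.2 ▸ rfl)
    have hcount : ∀ a, π.count a ≤ ((Finset.univ : Finset ι) ∩ topItems P k a).card := by
      intro a
      rw [Finset.univ_inter, aux_card_topItems P k a hkcard, hbal a]
    have hlen : (Finset.univ : Finset ι).card ≤ π.length := by
      rw [aux_length k π hbal, Finset.card_univ, hcard, Nat.mul_comm]
    obtain ⟨a, ha⟩ := aux_covers P π Finset.univ o (Finset.mem_univ o) hlen
    have htop := aux_picks_top P k hdisj π Finset.univ hcount a o ha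
    rw [← H a, Finset.mem_filter] at htop
    rw [htop.2]
    exact ha
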